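/- Let (Z, μ) and (A, ν) be σ-finite measure spaces, let γ : Z → [0,∞) be measurable, and let ρ : Z × A → [0,∞) be a probability kernel density (∫ ρ(z,a) dν(a) = 1 for every z). If a random pair ((ζ, α), w) with values in (Z × A) × [0,∞) is strictly properly weighted for the extended density γ̃(z,a) := γ(z)·ρ(z,a) on (Z × A, μ ⊗ ν), then the pair (ζ, w), obtained by discarding the auxiliary component, is strictly properly weighted for γ on (Z, μ). -/

import Mathlib

open MeasureTheory ProbabilityTheory ENNReal NNReal

/-- Marginalization preserves strict proper weighting: if `((ζ, α), w)` is strictly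
properly weighted for the auxiliary-variable extension `γ̃(z,a) = γ(z)·ρ(z,a)` where
the auxiliary conditional `ρ` integrates to one, then `(ζ, w)` is strictly properly
weighted for `γ`. -/
theorem marginalize_strictly_properly_weighted
    {Z A α : Type*} [MeasurableSpace Z] [MeasurableSpace A] [MeasurableSpace α]
    (μ : Measure Z) [SigmaFinite μ] (ν : Measure A) [SigmaFinite ν]
    (P : Measure α) [IsProbabilityMeasure P]
    (γ : Z → ℝ≥0) (hγ : Measurable γ)
    (ρ : Z × A → ℝ≥0) (hρ : Measurable ρ)
    (hρ1 : ∀ z, ∫⁻ a, (ρ (z, a) : ℝ≥0∞) ∂ν = 1)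
    (ζ : α → Z) (ξ : α → A) (w : α → ℝ≥0)
    (hζ : Measurable ζ) (hξ : Measurable ξ) (hw : Measurable w)
    (hpw : ∀ h : Z × A → ℝ≥0∞, Measurable h →
      ∫⁻ ω, (w ω : ℝ≥0∞) * h (ζ ω, ξ ω) ∂P
        = ∫⁻ p, ((γ p.1 : ℝ≥0∞) * (ρ p : ℝ≥0∞)) * h p ∂(μ.prod ν)) :
    ∀ h : Z → ℝ≥0∞, Measurable h →
      ∫⁻ ω, (w ω : ℝ≥0∞) * h (ζ ω) ∂P = ∫⁻ z, (γ z : ℝ≥0∞) * h z ∂μ := by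
  intro h hh
  rw [hpw (fun p => h p.1) (hh.comp measurable_fst),
    lintegral_prod (fun p : Z × A => (γ p.1 : ℝ≥0∞) * ρ p * h p.1)
      (by fun_prop)]
  congr 1
  ext z
  simp only [mul_right_comm _ _ (h z)]
  rw [lintegral_const_mul _ (f := fun a => (ρ (z, a) : ℝ≥0∞)) (by fun_prop), hρ1, mul_one]
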